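/- If G is a (P₃ ∪ P₂)-free graph with clique number ω, then the chromatic number of G is at most ω(ω+1)(ω+2)/6. -/

import Mathlib

open SimpleGraph

/-- `H` occurs as an induced subgraph of `G`. -/
def IsInducedCopy {α β : Type*} (H : SimpleGraph α) (G : SimpleGraph β) : Prop :=
  ∃ f : α ↪ β, ∀ a b : α, G.Adj (f a) (f b) ↔ H.Adj a b

/-- `G` is `H`-free: no induced copy of `H`. -/
def Free {α β : Type*} (G : SimpleGraph α) (H : SimpleGraph β) : Prop :=
  ¬ IsInducedCopy H G

/-- `P₃ ∪ P₂`: disjoint union of a path on 3 vertices and an edge. -/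
def P3UP2 : SimpleGraph (Fin 5) :=
  SimpleGraph.fromRel (fun a b => (a, b) ∈ [((0 : Fin 5), (1 : Fin 5)), (1, 2), (3, 4)])

/-- The diamond: `K₄` minus an edge. -/
def diamondG : SimpleGraph (Fin 4) :=
  SimpleGraph.fromRel (fun a b =>
    (a, b) ∈ [((0 : Fin 4), (2 : Fin 4)), (0, 3), (1, 2), (1, 3), (2, 3)])

/-- `2K₂`: two disjoint edges. -/
def twoK2 : SimpleGraph (Fin 4) :=
  SimpleGraph.fromRel (fun a b => (a, b) ∈ [((0 : Fin 4), (1 : Fin 4)), (2, 3)])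

/-- `P₄ ∪ P₂`. -/
def P4UP2 : SimpleGraph (Fin 6) :=
  SimpleGraph.fromRel (fun a b =>
    (a, b) ∈ [((0 : Fin 6), (1 : Fin 6)), (1, 2), (2, 3), (4, 5)])

/-- The cycle on `n` vertices (for `n ≥ 3`), as a graph on `ZMod n`. -/
def cycG (n : ℕ) : SimpleGraph (ZMod n) :=
  SimpleGraph.fromRel (fun a b => b = a + 1)

/-- A graph is perfect if every induced subgraph has chromatic number
equal to its clique number. -/
def IsPerfect {V : Type*} (G : SimpleGraph V) : Prop :=
  ∀ s : Set V, (G.induce s).chromaticNumber = ((G.induce s).cliqueNum : ℕ∞)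

/-- The set `C_{ij}` attached to a maximum clique enumerated by `f : Fin ω ↪ V`:
vertices outside the clique, non-adjacent to both `f i` and `f j`, where `(i,j)`
is the lexicographically least such pair (this closed form is equivalent to the
iterative definition removing earlier `C`-sets). -/
def Cset {V : Type*} (G : SimpleGraph V) {ω : ℕ} (f : Fin ω ↪ V) (i j : Fin ω) : Set V :=
  {v | v ∉ Set.range f ∧ ¬ G.Adj v (f i) ∧ ¬ G.Adj v (f j) ∧
    ∀ p q : Fin ω, p < q → ¬ G.Adj v (f p) → ¬ G.Adj v (f q) →
      i < p ∨ (i = p ∧ j ≤ q)}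

/-- The set `I_a` attached to a maximum clique enumerated by `f : Fin ω ↪ V`:
vertices outside the clique adjacent to every clique vertex except `f k`. -/
def Iset {V : Type*} (G : SimpleGraph V) {ω : ℕ} (f : Fin ω ↪ V) (k : Fin ω) : Set V :=
  {v | v ∉ Set.range f ∧ ¬ G.Adj v (f k) ∧ ∀ l : Fin ω, l ≠ k → G.Adj v (f l)}

namespace P3P2Aux
open Finset

set_option linter.unusedSectionVars false
set_option maxHeartbeats 1000000

variable {V : Type*} [Fintype V] [DecidableEq V] {G : SimpleGraph V} [DecidableRel G.Adj]

lemma no_copy (hfree : _root_.Free G P3UP2) {a b c d e : V}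
    (hab : G.Adj a b) (hbc : G.Adj b c) (hde : G.Adj d e)
    (hac : ¬ G.Adj a c) (had : ¬ G.Adj a d) (hae : ¬ G.Adj a e)
    (hbd : ¬ G.Adj b d) (hbe : ¬ G.Adj b e) (hcd : ¬ G.Adj c d) (hce : ¬ G.Adj c e)
    (nac : a ≠ c) (nad : a ≠ d) (nae : a ≠ e) (nbd : b ≠ d) (nbe : b ≠ e)
    (ncd : c ≠ d) (nce : c ≠ e) : False := by
  apply hfree
  have nab : a ≠ b := hab.ne
  have nbc : b ≠ c := hbc.ne
  have nde : d ≠ e := hde.ne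
  have hba : G.Adj b a := hab.symm
  have hcb : G.Adj c b := hbc.symm
  have hed : G.Adj e d := hde.symm
  have hca : ¬ G.Adj c a := fun h => hac h.symm
  have hda : ¬ G.Adj d a := fun h => had h.symm
  have hea : ¬ G.Adj e a := fun h => hae h.symm
  have hdb : ¬ G.Adj d b := fun h => hbd h.symm
  have heb : ¬ G.Adj e b := fun h => hbe h.symm
  have hdc : ¬ G.Adj d c := fun h => hcd h.symm
  have hec : ¬ G.Adj e c := fun h => hce h.symm
  have nba : b ≠ a := nab.symm
  have ncb : c ≠ b := nbc.symm
  have ned : e ≠ d := nde.symm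
  have nca : c ≠ a := nac.symm
  have nda : d ≠ a := nad.symm
  have nea : e ≠ a := nae.symm
  have ndb : d ≠ b := nbd.symm
  have neb : e ≠ b := nbe.symm
  have ndc : d ≠ c := ncd.symm
  have nec : e ≠ c := nce.symm
  refine ⟨⟨![a,b,c,d,e], ?_⟩, ?_⟩
  · intro x y hxy
    fin_cases x <;> fin_cases y <;> simp_all
  · intro x y
    change G.Adj (![a,b,c,d,e] x) (![a,b,c,d,e] y) ↔ P3UP2.Adj x y
    fin_cases x <;> fin_cases y <;>
      simp_all [P3UP2, SimpleGraph.fromRel_adj]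

section Main

variable (G) {ω : ℕ} (f : Fin ω ↪ V)

/-- Indices of clique vertices non-adjacent to `v`. -/
def NN (v : V) : Finset (Fin ω) := univ.filter fun k => ¬ G.Adj v (f k)

lemma mem_NN {v : V} {k : Fin ω} : k ∈ NN G f v ↔ ¬ G.Adj v (f k) := by
  simp [NN]

variable (hclq : ∀ p q : Fin ω, p ≠ q → G.Adj (f p) (f q))
  (hmax : ∀ t : Finset V, G.IsClique (t : Set V) → t.card ≤ ω)

include hclq in
lemma NN_self (k : Fin ω) : NN G f (f k) = {k} := by
  ext l
  simp only [mem_NN, mem_singleton]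
  constructor
  · intro h
    by_contra hlk
    exact h (hclq k l (Ne.symm hlk))
  · rintro rfl; exact G.irrefl

include hclq hmax in
lemma NN_nonempty (v : V) : (NN G f v).Nonempty := by
  rw [Finset.nonempty_iff_ne_empty]
  intro h
  have hadj : ∀ k, G.Adj v (f k) := by
    intro k
    by_contra hk
    have : k ∈ NN G f v := (mem_NN G f).2 hk
    simp [h] at this
  have hnr : ∀ k, v ≠ f k := fun k hk => G.irrefl (hk ▸ hadj k)
  have hcl : G.IsClique ((insert v (univ.image f) : Finset V) : Set V) := by
    intro x hx y hy hxy
    simp only [coe_insert, Set.mem_insert_iff, mem_coe, mem_image, mem_univ, true_and] at hx hy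
    rcases hx with rfl | ⟨p, rfl⟩
    · rcases hy with rfl | ⟨q, rfl⟩
      · exact absurd rfl hxy
      · exact hadj q
    · rcases hy with rfl | ⟨q, rfl⟩
      · exact (hadj p).symm
      · exact hclq p q (fun h => hxy (congrArg f h))
  have hle := hmax _ hcl
  have hnm : v ∉ univ.image f := by
    simp only [mem_image, mem_univ, true_and]
    rintro ⟨k, rfl⟩
    exact hnr k rfl
  rw [card_insert_of_notMem hnm, card_image_of_injective _ f.injective, card_univ,
    Fintype.card_fin] at hle
  omega

/-- least non-neighbor index -/
noncomputable def iv (v : V) : Fin ω := (NN G f v).min' (NN_nonempty G f hclq hmax v)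

lemma iv_mem (v : V) : iv G f hclq hmax v ∈ NN G f v := Finset.min'_mem _ _

lemma not_adj_iv (v : V) : ¬ G.Adj v (f (iv G f hclq hmax v)) :=
  (mem_NN G f).1 (iv_mem G f hclq hmax v)

/-- second least non-neighbor index (junk value if only one) -/
noncomputable def jv (v : V) : Fin ω :=
  if h : ((NN G f v).erase (iv G f hclq hmax v)).Nonempty then
    ((NN G f v).erase (iv G f hclq hmax v)).min' h
  else iv G f hclq hmax v

lemma erase_nonempty {v : V} (hb : 2 ≤ (NN G f v).card) :
    ((NN G f v).erase (iv G f hclq hmax v)).Nonempty := by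
  rw [← Finset.card_pos, card_erase_of_mem (iv_mem G f hclq hmax v)]
  omega

lemma jv_mem_erase {v : V} (hb : 2 ≤ (NN G f v).card) :
    jv G f hclq hmax v ∈ (NN G f v).erase (iv G f hclq hmax v) := by
  rw [jv, dif_pos (erase_nonempty G f hclq hmax hb)]
  exact Finset.min'_mem _ _

lemma jv_mem {v : V} (hb : 2 ≤ (NN G f v).card) :
    jv G f hclq hmax v ∈ NN G f v :=
  Finset.mem_of_mem_erase (jv_mem_erase G f hclq hmax hb)

lemma not_adj_jv {v : V} (hb : 2 ≤ (NN G f v).card) :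
    ¬ G.Adj v (f (jv G f hclq hmax v)) :=
  (mem_NN G f).1 (jv_mem G f hclq hmax hb)

lemma iv_lt_jv {v : V} (hb : 2 ≤ (NN G f v).card) :
    iv G f hclq hmax v < jv G f hclq hmax v := by
  have hne : jv G f hclq hmax v ≠ iv G f hclq hmax v :=
    Finset.ne_of_mem_erase (jv_mem_erase G f hclq hmax hb)
  have hle : iv G f hclq hmax v ≤ jv G f hclq hmax v :=
    Finset.min'_le _ _ (jv_mem G f hclq hmax hb)
  exact lt_of_le_of_ne hle (Ne.symm hne)

lemma adj_of_lt_jv {v : V} (hb : 2 ≤ (NN G f v).card) {p : Fin ω}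
    (hp : p < jv G f hclq hmax v) (hpi : p ≠ iv G f hclq hmax v) : G.Adj v (f p) := by
  by_contra h
  have hmem : p ∈ (NN G f v).erase (iv G f hclq hmax v) :=
    Finset.mem_erase.2 ⟨hpi, (mem_NN G f).2 h⟩
  have hle := Finset.min'_le _ _ hmem
  rw [jv, dif_pos (erase_nonempty G f hclq hmax hb)] at hp
  exact absurd hle (not_le.2 hp)

include hclq in
lemma not_range {v : V} (hb : 2 ≤ (NN G f v).card) (k : Fin ω) : v ≠ f k := by
  intro h
  rw [h, NN_self G f hclq] at hb
  simp at hb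

/-- Three vertices in the same class with a–b, b–c adjacent must have a–c adjacent,
else together with the clique edge `f i – f j` we get an induced `P₃ ∪ P₂`. -/
lemma class_triple (hfree : _root_.Free G P3UP2) {a b c : V}
    (hab : G.Adj a b) (hbc : G.Adj b c) (hac : a ≠ c)
    (haB : 2 ≤ (NN G f a).card)
    (hbB : 2 ≤ (NN G f b).card)
    (hcB : 2 ≤ (NN G f c).card)
    (hbi : iv G f hclq hmax b = iv G f hclq hmax a)
    (hbj : jv G f hclq hmax b = jv G f hclq hmax a)
    (hci : iv G f hclq hmax c = iv G f hclq hmax a)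
    (hcj : jv G f hclq hmax c = jv G f hclq hmax a) : G.Adj a c := by
  by_contra h
  set i := iv G f hclq hmax a with hi
  set j := jv G f hclq hmax a with hj
  have hij : i ≠ j := (iv_lt_jv G f hclq hmax haB).ne
  refine no_copy hfree hab hbc (hclq i j hij) h ?_ ?_ ?_ ?_ ?_ ?_ hac ?_ ?_ ?_ ?_ ?_ ?_
  · exact not_adj_iv G f hclq hmax a
  · exact not_adj_jv G f hclq hmax haB
  · exact hbi ▸ not_adj_iv G f hclq hmax b
  · exact hbj ▸ not_adj_jv G f hclq hmax hbB
  · exact hci ▸ not_adj_iv G f hclq hmax c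
  · exact hcj ▸ not_adj_jv G f hclq hmax hcB
  · exact not_range G f hclq haB i
  · exact not_range G f hclq haB j
  · exact not_range G f hclq hbB i
  · exact not_range G f hclq hbB j
  · exact not_range G f hclq hcB i
  · exact not_range G f hclq hcB j

variable (vo : V ↪ ℕ)

/-- Earlier members of the same class adjacent to `v`. -/
noncomputable def rankSet (v : V) : Finset V :=
  univ.filter fun u => 2 ≤ (NN G f u).card ∧
    iv G f hclq hmax u = iv G f hclq hmax v ∧
    jv G f hclq hmax u = jv G f hclq hmax v ∧ vo u < vo v ∧ G.Adj u v

lemma mem_rankSet {v u : V} : u ∈ rankSet G f hclq hmax vo v ↔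
    2 ≤ (NN G f u).card ∧
    iv G f hclq hmax u = iv G f hclq hmax v ∧
    jv G f hclq hmax u = jv G f hclq hmax v ∧ vo u < vo v ∧ G.Adj u v := by
  simp [rankSet]

lemma rank_le (hfree : _root_.Free G P3UP2) {v : V} (hb : 2 ≤ (NN G f v).card) :
    (rankSet G f hclq hmax vo v).card + (jv G f hclq hmax v).val ≤ ω := by
  set i := iv G f hclq hmax v with hi
  set j := jv G f hclq hmax v with hj
  set A := rankSet G f hclq hmax vo v with hA
  set B : Finset V := ((Finset.Iio j).erase i).image f with hB
  have hAmem : ∀ u ∈ A, 2 ≤ (NN G f u).card ∧ iv G f hclq hmax u = i ∧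
      jv G f hclq hmax u = j ∧ vo u < vo v ∧ G.Adj u v :=
    fun u hu => (mem_rankSet G f hclq hmax vo).1 hu
  have hBmem : ∀ x ∈ B, ∃ p : Fin ω, p < j ∧ p ≠ i ∧ x = f p := by
    intro x hx
    simp only [hB, mem_image, mem_erase, Finset.mem_Iio] at hx
    obtain ⟨p, ⟨hp1, hp2⟩, rfl⟩ := hx
    exact ⟨p, hp2, hp1, rfl⟩
  -- the big clique
  have hcl : G.IsClique ((A ∪ insert v B : Finset V) : Set V) := by
    intro x hx y hy hxy
    simp only [coe_union, coe_insert, Set.mem_union, Set.mem_insert_iff, mem_coe] at hx hy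
    have hadjB : ∀ z, (z ∈ A ∨ z = v) → ∀ p : Fin ω, p < j → p ≠ i → G.Adj z (f p) := by
      intro z hz p hp hpi
      rcases hz with hz | rfl
      · obtain ⟨hzB, hzi, hzj, _, _⟩ := hAmem z hz
        exact adj_of_lt_jv G f hclq hmax hzB (hzj ▸ hp) (hzi ▸ hpi)
      · exact adj_of_lt_jv G f hclq hmax hb hp hpi
    have hnrAv : ∀ z, (z ∈ A ∨ z = v) → ∀ k, z ≠ f k := by
      intro z hz k
      rcases hz with hz | rfl
      · exact not_range G f hclq (hAmem z hz).1 k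
      · exact not_range G f hclq hb k
    rcases hx with hx | hx | hx
    · rcases hy with hy | hy | hy
      · -- both in A
        obtain ⟨hxB, hxi, hxj, _, hxv⟩ := hAmem x hx
        obtain ⟨hyB, hyi, hyj, _, hyv⟩ := hAmem y hy
        exact class_triple G f hclq hmax hfree hxv hyv.symm hxy hxB hb hyB
          hxi.symm hxj.symm (hyi.trans hxi.symm) (hyj.trans hxj.symm)
      · exact hy ▸ (hAmem x hx).2.2.2.2
      · obtain ⟨p, hp, hpi, rfl⟩ := hBmem y hy
        exact hadjB x (Or.inl hx) p hp hpi
    · subst hx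
      rcases hy with hy | hy | hy
      · exact ((hAmem y hy).2.2.2.2).symm
      · exact absurd hy.symm hxy
      · obtain ⟨p, hp, hpi, rfl⟩ := hBmem y hy
        exact hadjB x (Or.inr rfl) p hp hpi
    · obtain ⟨p, hp, hpi, rfl⟩ := hBmem x hx
      rcases hy with hy | hy | hy
      · exact (hadjB y (Or.inl hy) p hp hpi).symm
      · exact (hadjB y (Or.inr hy) p hp hpi).symm
      · obtain ⟨q, hq, hqi, rfl⟩ := hBmem y hy
        exact hclq p q (fun hpq => hxy (congrArg f hpq))
  have hle := hmax _ hcl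
  -- cardinalities
  have hvB : v ∉ B := by
    intro hv
    obtain ⟨p, _, _, hp⟩ := hBmem v hv
    exact not_range G f hclq hb p hp
  have hdisj : Disjoint A (insert v B) := by
    rw [Finset.disjoint_left]
    intro u hu hmem
    obtain ⟨huB, _, _, hlt, _⟩ := hAmem u hu
    rcases Finset.mem_insert.1 hmem with rfl | hmem
    · exact absurd hlt (lt_irrefl _)
    · obtain ⟨p, _, _, hp⟩ := hBmem u hmem
      exact not_range G f hclq huB p hp
  have hij : i < j := iv_lt_jv G f hclq hmax hb
  have hiIio : i ∈ Finset.Iio j := Finset.mem_Iio.2 hij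
  have hcardB : B.card = j.val - 1 := by
    rw [hB, card_image_of_injective _ f.injective, card_erase_of_mem hiIio, Fin.card_Iio]
  have hcard : (A ∪ insert v B).card = A.card + 1 + (j.val - 1) := by
    rw [card_union_of_disjoint hdisj, card_insert_of_notMem hvB, hcardB]
    omega
  have hj1 : 1 ≤ j.val := by
    have := Fin.lt_def.mp hij
    omega
  rw [hcard] at hle
  have := j.isLt
  omega

/-- The coloring. -/
noncomputable def col (hfree : _root_.Free G P3UP2) (v : V) :
    (Fin ω) ⊕ (Σ j : Fin ω, Fin j.val × Fin (ω + 1 - j.val)) :=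
  if hb : 2 ≤ (NN G f v).card then
    Sum.inr ⟨jv G f hclq hmax v,
      (⟨(iv G f hclq hmax v).val, iv_lt_jv G f hclq hmax hb⟩,
       ⟨(rankSet G f hclq hmax vo v).card, by
          have h1 := rank_le G f hclq hmax vo hfree hb
          have h2 := (jv G f hclq hmax v).isLt
          omega⟩)⟩
  else Sum.inl (iv G f hclq hmax v)

include hclq hmax in
lemma small_small (hfree : _root_.Free G P3UP2) {u v : V}
    (hu : ¬ 2 ≤ (NN G f u).card) (hv : ¬ 2 ≤ (NN G f v).card)
    (hiv : iv G f hclq hmax u = iv G f hclq hmax v) (huv : G.Adj u v) : False := by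
  set k := iv G f hclq hmax u with hk
  have hNNs : ∀ w : V, ¬ 2 ≤ (NN G f w).card → NN G f w = {iv G f hclq hmax w} := by
    intro w hw
    have h1 : 0 < (NN G f w).card := Finset.card_pos.2 (NN_nonempty G f hclq hmax w)
    have h2 : (NN G f w).card = 1 := by omega
    obtain ⟨a, ha⟩ := Finset.card_eq_one.1 h2
    have := iv_mem G f hclq hmax w
    rw [ha] at this ⊢
    rw [Finset.mem_singleton] at this
    rw [this]
  have hNu : NN G f u = {k} := hNNs u hu
  have hNv : NN G f v = {k} := by rw [hNNs v hv, ← hiv]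
  have hadj : ∀ w : V, NN G f w = {k} → ∀ l, l ≠ k → G.Adj w (f l) := by
    intro w hw l hl
    by_contra h
    have : l ∈ NN G f w := (mem_NN G f).2 h
    rw [hw, Finset.mem_singleton] at this
    exact hl this
  have hnr : ∀ w : V, NN G f w = {k} → ∀ l, l ≠ k → w ≠ f l := by
    intro w hw l hl he
    rw [he, NN_self G f hclq] at hw
    exact hl (Finset.singleton_inj.1 hw)
  set B : Finset V := (univ.erase k).image f with hB
  have hBmem : ∀ x ∈ B, ∃ l : Fin ω, l ≠ k ∧ x = f l := by
    intro x hx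
    simp only [hB, mem_image, mem_erase, mem_univ, and_true] at hx
    obtain ⟨l, hl, rfl⟩ := hx
    exact ⟨l, hl, rfl⟩
  have hcl : G.IsClique ((insert u (insert v B) : Finset V) : Set V) := by
    intro x hx y hy hxy
    simp only [coe_insert, Set.mem_insert_iff, mem_coe] at hx hy
    rcases hx with rfl | rfl | hx
    · rcases hy with rfl | rfl | hy
      · exact absurd rfl hxy
      · exact huv
      · obtain ⟨l, hl, rfl⟩ := hBmem y hy
        exact hadj x hNu l hl
    · rcases hy with rfl | rfl | hy
      · exact huv.symm
      · exact absurd rfl hxy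
      · obtain ⟨l, hl, rfl⟩ := hBmem y hy
        exact hadj x hNv l hl
    · obtain ⟨l, hl, rfl⟩ := hBmem x hx
      rcases hy with rfl | rfl | hy
      · exact (hadj y hNu l hl).symm
      · exact (hadj y hNv l hl).symm
      · obtain ⟨m, hm, rfl⟩ := hBmem y hy
        exact hclq l m (fun h => hxy (congrArg f h))
  have hle := hmax _ hcl
  have hvB : v ∉ B := by
    intro hx
    obtain ⟨l, hl, he⟩ := hBmem v hx
    exact hnr v hNv l hl he
  have huB : u ∉ insert v B := by
    intro hx
    rcases Finset.mem_insert.1 hx with rfl | hx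
    · exact G.irrefl huv
    · obtain ⟨l, hl, he⟩ := hBmem u hx
      exact hnr u hNu l hl he
  have hcardB : B.card = ω - 1 := by
    rw [hB, card_image_of_injective _ f.injective, card_erase_of_mem (mem_univ k),
      card_univ, Fintype.card_fin]
  rw [card_insert_of_notMem huB, card_insert_of_notMem hvB, hcardB] at hle
  have : 0 < ω := k.pos
  omega

lemma rank_lt (hfree : _root_.Free G P3UP2) {u v : V}
    (hu : 2 ≤ (NN G f u).card) (hv : 2 ≤ (NN G f v).card)
    (hiv : iv G f hclq hmax u = iv G f hclq hmax v)
    (hjv : jv G f hclq hmax u = jv G f hclq hmax v)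
    (hlt : vo u < vo v) (huv : G.Adj u v) :
    (rankSet G f hclq hmax vo u).card < (rankSet G f hclq hmax vo v).card := by
  apply Finset.card_lt_card
  rw [Finset.ssubset_iff_of_subset]
  · exact ⟨u, (mem_rankSet G f hclq hmax vo).2 ⟨hu, hiv, hjv, hlt, huv⟩,
      fun hmem => absurd ((mem_rankSet G f hclq hmax vo).1 hmem).2.2.2.1 (lt_irrefl _)⟩
  · intro w hw
    obtain ⟨hwB, hwi, hwj, hwlt, hwu⟩ := (mem_rankSet G f hclq hmax vo).1 hw
    refine (mem_rankSet G f hclq hmax vo).2 ⟨hwB, hwi.trans hiv, hwj.trans hjv,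
      hwlt.trans hlt, ?_⟩
    have hwv : w ≠ v := fun h => absurd (h ▸ (hwlt.trans hlt)) (lt_irrefl _)
    exact class_triple G f hclq hmax hfree hwu huv hwv hwB hu hv
      hwi.symm hwj.symm (hwi.trans hiv).symm (hwj.trans hjv).symm

lemma col_valid (hfree : _root_.Free G P3UP2) {u v : V} (huv : G.Adj u v) :
    col G f hclq hmax vo hfree u ≠ col G f hclq hmax vo hfree v := by
  intro heq
  by_cases hu : 2 ≤ (NN G f u).card <;> by_cases hv : 2 ≤ (NN G f v).card <;>
    rw [col, col] at heq
  · -- both big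
    rw [dif_pos hu, dif_pos hv] at heq
    have hsig := Sum.inr_injective heq
    have h3 := congrArg
      (fun x : Σ j : Fin ω, Fin j.val × Fin (ω + 1 - j.val) =>
        (x.1.val, (x.2.1.val, x.2.2.val))) hsig
    simp only [Prod.mk.injEq] at h3
    obtain ⟨h1, h2, h4⟩ := h3
    have hjv : jv G f hclq hmax u = jv G f hclq hmax v := Fin.val_injective h1
    have hiv : iv G f hclq hmax u = iv G f hclq hmax v := Fin.val_injective h2
    have hne : vo u ≠ vo v := fun h => G.irrefl ((vo.injective h) ▸ huv)
    rcases hne.lt_or_gt with hlt | hlt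
    · exact absurd h4 (rank_lt G f hclq hmax vo hfree hu hv hiv hjv hlt huv).ne
    · exact absurd h4.symm
        (rank_lt G f hclq hmax vo hfree hv hu hiv.symm hjv.symm hlt huv.symm).ne
  · rw [dif_pos hu, dif_neg hv] at heq
    exact absurd heq (by simp)
  · rw [dif_neg hu, dif_pos hv] at heq
    exact absurd heq (by simp)
  · rw [dif_neg hu, dif_neg hv] at heq
    have hiv : iv G f hclq hmax u = iv G f hclq hmax v := Sum.inl_injective heq
    exact small_small G f hclq hmax hfree hu hv hiv huv

include f hclq hmax in
lemma colorable (hfree : _root_.Free G P3UP2) :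
    G.Colorable (ω + ∑ j : Fin ω, j.val * (ω + 1 - j.val)) := by
  classical
  let vo : V ↪ ℕ := (Fintype.equivFin V).toEmbedding.trans Fin.valEmbedding
  let C : G.Coloring ((Fin ω) ⊕ (Σ j : Fin ω, Fin j.val × Fin (ω + 1 - j.val))) :=
    SimpleGraph.Coloring.mk (col G f hclq hmax vo hfree)
      (fun hadj => col_valid G f hclq hmax vo hfree hadj)
  have hc := C.colorable
  have hcard : Fintype.card ((Fin ω) ⊕ (Σ j : Fin ω, Fin j.val × Fin (ω + 1 - j.val)))
      = ω + ∑ j : Fin ω, j.val * (ω + 1 - j.val) := by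
    simp [Fintype.card_sigma]
  rwa [hcard] at hc

end Main

lemma sum_cube (n : ℕ) :
    6 * (n + ∑ j ∈ Finset.range n, j * (n + 1 - j)) = n * (n + 1) * (n + 2) := by
  induction n with
  | zero => simp
  | succ m ih =>
    have h2 : ∀ j ∈ Finset.range m, j * (m + 2 - j) = j * (m + 1 - j) + j := by
      intro j hj
      have hj' := Finset.mem_range.1 hj
      have he : m + 2 - j = (m + 1 - j) + 1 := by omega
      rw [he, Nat.mul_add, Nat.mul_one]
    have h1 : ∑ j ∈ Finset.range (m + 1), j * (m + 1 + 1 - j)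
        = (∑ j ∈ Finset.range m, j * (m + 1 - j)) + (∑ j ∈ Finset.range m, j) + 2 * m := by
      rw [Finset.sum_range_succ, Finset.sum_congr rfl h2, Finset.sum_add_distrib]
      have : m + 1 + 1 - m = 2 := by omega
      rw [this]
      ring
    rw [h1]
    have h3 : 2 * ∑ j ∈ Finset.range m, j = m * (m - 1) := by
      have := Finset.sum_range_id_mul_two m
      omega
    rcases Nat.eq_zero_or_pos m with rfl | hm
    · simp
    · obtain ⟨k, rfl⟩ : ∃ k, m = k + 1 := ⟨m - 1, by omega⟩
      rw [Nat.add_sub_cancel] at h3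
      set a := ∑ j ∈ Finset.range (k + 1), j * (k + 1 + 1 - j) with ha
      set b := ∑ j ∈ Finset.range (k + 1), j with hb
      have ihz : (6 : ℤ) * ((k : ℤ) + 1 + a) = ((k : ℤ) + 1) * ((k : ℤ) + 2) * ((k : ℤ) + 3) := by
        exact_mod_cast ih
      have h3z : (2 : ℤ) * b = ((k : ℤ) + 1) * k := by exact_mod_cast h3
      have goal : (6 : ℤ) * (((k : ℤ) + 1 + 1) + (a + b + 2 * ((k : ℤ) + 1)))
          = ((k : ℤ) + 2) * ((k : ℤ) + 3) * ((k : ℤ) + 4) := by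
        linear_combination ihz + 3 * h3z
      exact_mod_cast goal

end P3P2Aux


theorem stmt0 {V : Type*} [Fintype V] (G : SimpleGraph V) (hfree : _root_.Free G P3UP2) :
    G.chromaticNumber ≤ ((G.cliqueNum * (G.cliqueNum + 1) * (G.cliqueNum + 2) / 6 : ℕ) : ℕ∞) := by
  classical
  obtain ⟨s, hs⟩ := G.exists_isNClique_cliqueNum
  set ω := G.cliqueNum with hω
  have hcard : Fintype.card s = ω := by rw [Fintype.card_coe]; exact hs.2
  let e0 : Fin ω ≃ s := (Fintype.equivFinOfCardEq hcard).symm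
  let f : Fin ω ↪ V := e0.toEmbedding.trans (Function.Embedding.subtype _)
  have hclq : ∀ p q : Fin ω, p ≠ q → G.Adj (f p) (f q) := by
    intro p q hpq
    have hp : f p ∈ (s : Set V) := Finset.mem_coe.mpr (e0 p).2
    have hq : f q ∈ (s : Set V) := Finset.mem_coe.mpr (e0 q).2
    exact hs.1 hp hq (fun h => hpq (f.injective h))
  have hmax : ∀ t : Finset V, G.IsClique (t : Set V) → t.card ≤ ω := fun t ht =>
    ht.card_le_cliqueNum
  have hc := P3P2Aux.colorable G f hclq hmax hfree
  rw [Fin.sum_univ_eq_sum_range (fun m => m * (ω + 1 - m)) ω] at hc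
  have hsum := P3P2Aux.sum_cube ω
  have hN : ω + ∑ j ∈ Finset.range ω, j * (ω + 1 - j) = ω * (ω + 1) * (ω + 2) / 6 := by
    set S := ∑ j ∈ Finset.range ω, j * (ω + 1 - j) with hS
    set P := ω * (ω + 1) * (ω + 2) with hP
    clear_value S P
    omega
  rw [hN] at hc
  exact hc.chromaticNumber_le
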